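/- Let X be an irreducible sofic shift, π: X → Y a finite-to-one factor code of degree d_π, ν a fully supported ergodic shift-invariant measure on Y, and λ a degree joining over ν. Then the set {p_i λ : 1 ≤ i ≤ d_π} of coordinate marginals of λ is exactly the set of all ergodic shift-invariant measures μ on X with πμ = ν. -/

import Mathlib

open MeasureTheory Set Filter Topology
open scoped ENNReal NNReal

/-- The shift map on the full shift `A^ℤ`. -/
def shiftMap {A : Type*} : (ℤ → A) → ℤ → A := fun x i => x (i + 1)

/-- The inverse shift map. -/
def shiftInvMap {A : Type*} : (ℤ → A) → ℤ → A := fun x i => x (i - 1)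

/-- The coordinatewise shift on `n`-tuples of points of the full shift. -/
def prodShift {A : Type*} {n : ℕ} : (Fin n → ℤ → A) → Fin n → ℤ → A :=
  fun x i => shiftMap (x i)

/-- A map between full shifts is a sliding block code if it is given by a local block map. -/
def IsSlidingBlockCode {A B : Type*} (π : (ℤ → A) → ℤ → B) : Prop :=
  ∃ (r : ℕ) (Φ : (Fin (2 * r + 1) → A) → B),
    ∀ x i, π x i = Φ fun j => x (i + (j : ℤ) - (r : ℤ))

/-- A subset of the full shift is a shift of finite type if it is the set of points
avoiding a (finite) set of forbidden words of some fixed length `N` (and is nonempty). -/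
def IsSFT {A : Type*} (X : Set (ℤ → A)) : Prop :=
  X.Nonempty ∧ ∃ (N : ℕ) (F : Set (Fin N → A)),
    X = {x | ∀ k : ℤ, (fun i : Fin N => x (k + (i : ℤ))) ∉ F}

/-- A sofic shift: the image of an SFT under a sliding block code. -/
def IsSofic {A : Type*} (X : Set (ℤ → A)) : Prop :=
  ∃ (m : ℕ) (Z : Set (ℤ → Fin m)) (φ : (ℤ → Fin m) → ℤ → A),
    IsSFT Z ∧ IsSlidingBlockCode φ ∧ φ '' Z = X

/-- A word occurs in the shift space `X`. -/
def WordIn {A : Type*} (X : Set (ℤ → A)) {n : ℕ} (w : Fin n → A) : Prop :=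
  ∃ x ∈ X, ∃ k : ℤ, ∀ i : Fin n, x (k + (i : ℤ)) = w i

/-- Irreducibility: any two words occurring in `X` can be seen in a single point of `X`,
with the first strictly to the left of the second (equivalently, `u w v` occurs in `X`). -/
def IsIrreducibleShift {A : Type*} (X : Set (ℤ → A)) : Prop :=
  ∀ {m n : ℕ} (u : Fin m → A) (v : Fin n → A), WordIn X u → WordIn X v →
    ∃ x ∈ X, ∃ i j : ℤ, i + (m : ℤ) ≤ j ∧ (∀ a : Fin m, x (i + (a : ℤ)) = u a) ∧
      ∀ b : Fin n, x (j + (b : ℤ)) = v b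

/-- `π` is a factor code from `X` onto `Y`: a sliding block code mapping `X` onto `Y`. -/
def IsFactorCodeOn {A B : Type*} (π : (ℤ → A) → ℤ → B) (X : Set (ℤ → A))
    (Y : Set (ℤ → B)) : Prop :=
  IsSlidingBlockCode π ∧ π '' X = Y

/-- A point of `Y` is doubly transitive if its forward and backward orbits are dense in `Y`. -/
def DoublyTransitiveIn {B : Type*} [TopologicalSpace B] (Y : Set (ℤ → B)) (y : ℤ → B) : Prop :=
  y ∈ Y ∧ Y ⊆ closure {z | ∃ n : ℕ, z = shiftMap^[n] y} ∧
    Y ⊆ closure {z | ∃ n : ℕ, z = shiftInvMap^[n] y}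

/-- The measure `μ` has full topological support on the shift space `X`:
every open set meeting `X` has positive measure. -/
def FullSupportOn {A : Type*} [TopologicalSpace A] [MeasurableSpace A]
    (μ : Measure (ℤ → A)) (X : Set (ℤ → A)) : Prop :=
  ∀ U : Set (ℤ → A), IsOpen U → (U ∩ X).Nonempty → 0 < μ U

/-- An `n`-fold `π`-relative joining supported on tuples from `X` with equal `π`-images. -/
def IsRelJoining {A B : Type*} [MeasurableSpace A] (X : Set (ℤ → A))
    (π : (ℤ → A) → ℤ → B) {n : ℕ} (lam : Measure (Fin n → ℤ → A)) : Prop :=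
  IsProbabilityMeasure lam ∧ MeasurePreserving prodShift lam lam ∧
    lam {x | (∀ i, x i ∈ X) ∧ ∀ i j, π (x i) = π (x j)} = 1

/-- A relative joining over `ν`: all the `π`-images of the marginals are `ν`. -/
def IsRelJoiningOver {A B : Type*} [MeasurableSpace A] [MeasurableSpace B]
    (X : Set (ℤ → A)) (π : (ℤ → A) → ℤ → B) (ν : Measure (ℤ → B)) {n : ℕ}
    (lam : Measure (Fin n → ℤ → A)) : Prop :=
  IsRelJoining X π lam ∧ ∀ i : Fin n, lam.map (fun x => π (x i)) = ν

/-- A relative joining is separating if a.e. tuple has pairwise distinct coordinates. -/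
def IsSeparating {A : Type*} [MeasurableSpace A] {n : ℕ}
    (lam : Measure (Fin n → ℤ → A)) : Prop :=
  lam {x | ∀ i j : Fin n, i ≠ j → x i ≠ x j} = 1

/-- A degree joining over `ν`: an ergodic `d`-fold separating relative joining over `ν`. -/
def IsDegreeJoining {A B : Type*} [MeasurableSpace A] [MeasurableSpace B]
    (X : Set (ℤ → A)) (π : (ℤ → A) → ℤ → B) (ν : Measure (ℤ → B)) (d : ℕ)
    (lam : Measure (Fin d → ℤ → A)) : Prop :=
  Ergodic prodShift lam ∧ IsRelJoiningOver X π ν lam ∧ IsSeparating lam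

/-- `x` is a generic point for the invariant measure `μ`: ergodic averages of every
continuous function converge to the integral. -/
def GenericFor {A : Type*} [TopologicalSpace A] [MeasurableSpace A] (x : ℤ → A)
    (μ : Measure (ℤ → A)) : Prop :=
  ∀ f : C(ℤ → A, ℝ),
    Tendsto (fun n : ℕ => (∑ k ∈ Finset.range n, f (shiftMap^[k] x)) / (n : ℝ))
      atTop (𝓝 (∫ z, f z ∂μ))

variable {A B : Type*} [Fintype A] [Fintype B]
  [TopologicalSpace A] [DiscreteTopology A] [MeasurableSpace A] [BorelSpace A]
  [TopologicalSpace B] [DiscreteTopology B] [MeasurableSpace B] [BorelSpace B]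


/-! ### Auxiliary lemmas -/

open ProbabilityTheory

lemma continuous_shiftMap' {C : Type*} [TopologicalSpace C] :
    Continuous (shiftMap (A := C)) :=
  continuous_pi fun i => continuous_apply (i + 1)

lemma continuous_shiftInvMap' {C : Type*} [TopologicalSpace C] :
    Continuous (shiftInvMap (A := C)) :=
  continuous_pi fun i => continuous_apply (i - 1)

lemma continuous_prodShift' {C : Type*} [TopologicalSpace C] {n : ℕ} :
    Continuous (prodShift (A := C) (n := n)) :=
  continuous_pi fun i => continuous_shiftMap'.comp (continuous_apply i)

lemma shift_leftInv' {C : Type*} :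
    Function.LeftInverse (shiftInvMap (A := C)) shiftMap := by
  intro x; funext i; simp [shiftMap, shiftInvMap]

lemma shift_rightInv' {C : Type*} :
    Function.RightInverse (shiftInvMap (A := C)) shiftMap := by
  intro x; funext i; simp [shiftMap, shiftInvMap]

lemma IsSlidingBlockCode.continuous {C D : Type*} [TopologicalSpace C] [TopologicalSpace D]
    [DiscreteTopology C] {π : (ℤ → C) → ℤ → D}
    (h : IsSlidingBlockCode π) : Continuous π := by
  obtain ⟨r, Φ, hΦ⟩ := h
  refine continuous_pi fun i => ?_
  have : (fun x => π x i) = (fun x : ℤ → C => Φ fun j => x (i + (j : ℤ) - (r : ℤ))) := by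
    funext x; exact hΦ x i
  rw [this]
  exact Continuous.comp continuous_of_discreteTopology
    (continuous_pi fun j => continuous_apply _)

lemma IsSFT.isClosed' {C : Type*} [TopologicalSpace C] [DiscreteTopology C]
    {Z : Set (ℤ → C)} (h : IsSFT Z) : IsClosed Z := by
  obtain ⟨-, N, F, rfl⟩ := h
  have : {x : ℤ → C | ∀ k : ℤ, (fun i : Fin N => x (k + (i : ℤ))) ∉ F} =
      ⋂ k : ℤ, (fun x : ℤ → C => fun i : Fin N => x (k + (i : ℤ))) ⁻¹' Fᶜ := by
    ext x; simp [mem_iInter]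
  rw [this]
  refine isClosed_iInter fun k => IsClosed.preimage ?_ ?_
  · exact continuous_pi fun j => continuous_apply _
  · exact isClosed_discrete _

lemma IsSofic.isCompact' {C : Type*} [TopologicalSpace C] [DiscreteTopology C] [Finite C]
    {X : Set (ℤ → C)} (h : IsSofic X) : IsCompact X := by
  obtain ⟨m, Z, φ, hZ, hφ, rfl⟩ := h
  exact (hZ.isClosed'.isCompact).image hφ.continuous

lemma map_withDensity_of_inv {α : Type*} [MeasurableSpace α] {f g : α → α}
    (hf : Measurable f) (hg : Measurable g) (hfg : Function.LeftInverse g f)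
    (m : Measure α) {h : α → ℝ≥0∞} (hh : Measurable h) :
    (m.withDensity h).map f = (m.map f).withDensity (h ∘ g) := by
  ext s hs
  rw [Measure.map_apply hf hs, withDensity_apply _ hs, withDensity_apply _ (hf hs),
    Measure.restrict_map hf hs, lintegral_map (hh.comp hg) hf]
  refine lintegral_congr fun x => ?_
  simp [hfg x]

/-- Two ergodic invariant probability measures for a map with a measurable left inverse
are either equal or mutually singular. -/
lemma ergodic_eq_or_mutuallySingular {α : Type*} [MeasurableSpace α]
    {f g : α → α} (hg : Measurable g) (hfg : Function.LeftInverse g f)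
    {μ μ' : Measure α} [IsProbabilityMeasure μ] [IsProbabilityMeasure μ']
    (hμ : Ergodic f μ) (hμ' : Ergodic f μ') : μ = μ' ∨ μ ⟂ₘ μ' := by
  have hf : Measurable f := hμ.measurable
  set m : Measure α := μ + μ' with hm
  have : IsFiniteMeasure m := by rw [hm]; infer_instance
  have hmapμ : μ.map f = μ := hμ.map_eq
  have hmapμ' : μ'.map f = μ' := hμ'.map_eq
  have hmapm : m.map f = m := by rw [hm, Measure.map_add _ _ hf, hmapμ, hmapμ']
  have hacμ : μ ≪ m := Measure.absolutelyContinuous_of_le (Measure.le_add_right le_rfl)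
  have hacμ' : μ' ≪ m := Measure.absolutelyContinuous_of_le (Measure.le_add_left le_rfl)
  set h : α → ℝ≥0∞ := μ.rnDeriv m with hdef
  set h' : α → ℝ≥0∞ := μ'.rnDeriv m with hdef'
  have hhm : Measurable h := Measure.measurable_rnDeriv μ m
  have hhm' : Measurable h' := Measure.measurable_rnDeriv μ' m
  have hWD : m.withDensity h = μ := Measure.withDensity_rnDeriv_eq μ m hacμ
  have hWD' : m.withDensity h' = μ' := Measure.withDensity_rnDeriv_eq μ' m hacμ'
  have key : ∀ (k : α → ℝ≥0∞), Measurable k →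
      (m.withDensity k).map f = m.withDensity k → k ∘ f =ᵐ[m] k := by
    intro k hk hinv
    have h1 : m.withDensity (k ∘ g) = m.withDensity k := by
      conv_lhs => rw [← hmapm]
      rw [← map_withDensity_of_inv hf hg hfg m hk, hinv]
    have h2 : k ∘ g =ᵐ[m] k :=
      (withDensity_eq_iff_of_sigmaFinite (hk.comp hg).aemeasurable hk.aemeasurable).mp h1
    have hqmp : Measure.QuasiMeasurePreserving f m m := ⟨hf, by rw [hmapm]⟩
    have h3 : (k ∘ g) ∘ f =ᵐ[m] k ∘ f := hqmp.ae_eq_comp h2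
    have h4 : (k ∘ g) ∘ f = k := by funext x; simp [Function.comp, hfg x]
    exact (h4 ▸ h3).symm
  have hinvh : h ∘ f =ᵐ[m] h := key h hhm (by rw [hWD, hmapμ])
  have hinvh' : h' ∘ f =ᵐ[m] h' := key h' hhm' (by rw [hWD', hmapμ'])
  obtain ⟨c, hc⟩ := hμ.ae_eq_const_of_ae_eq_comp₀ hhm.nullMeasurable
    (hinvh.filter_mono hacμ.ae_le)
  obtain ⟨c', hc'⟩ := hμ'.ae_eq_const_of_ae_eq_comp₀ hhm'.nullMeasurable
    (hinvh'.filter_mono hacμ'.ae_le)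
  have hsum : (fun x => h x + h' x) =ᵐ[m] fun _ => 1 := by
    have h1 := Measure.rnDeriv_add μ μ' m
    have h2 := Measure.rnDeriv_self m
    rw [hm] at h2 ⊢
    exact ((h1.symm.trans h2) : _)
  set E : Set α := {x | h x = c} with hE
  set E' : Set α := {x | h' x = c'} with hE'
  have hEmeas : MeasurableSet E := hhm (measurableSet_singleton c)
  have hE'meas : MeasurableSet E' := hhm' (measurableSet_singleton c')
  have hμEc : μ Eᶜ = 0 := by
    have : ∀ᵐ x ∂μ, x ∈ E := hc.mono fun x hx => hx
    exact ae_iff.mp this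
  have hμ'E'c : μ' E'ᶜ = 0 := by
    have : ∀ᵐ x ∂μ', x ∈ E' := hc'.mono fun x hx => hx
    exact ae_iff.mp this
  have hoffE : ∀ᵐ x ∂m, x ∉ E → h x = 0 := by
    have h0 : ∫⁻ x in Eᶜ, h x ∂m = 0 := by
      rw [← withDensity_apply _ hEmeas.compl, hWD]; exact hμEc
    have := (setLIntegral_eq_zero_iff hEmeas.compl hhm).mp h0
    exact this.mono fun x hx hxE => hx hxE
  have hoffE' : ∀ᵐ x ∂m, x ∉ E' → h' x = 0 := by
    have h0 : ∫⁻ x in E'ᶜ, h' x ∂m = 0 := by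
      rw [← withDensity_apply _ hE'meas.compl, hWD']; exact hμ'E'c
    have := (setLIntegral_eq_zero_iff hE'meas.compl hhm').mp h0
    exact this.mono fun x hx hxE => hx hxE
  by_cases hcc : c + c' = 1
  · left
    have hc0 : c ≠ 0 := by
      intro hc0
      have : h =ᵐ[m] 0 := by
        filter_upwards [hoffE] with x hx
        by_cases hxE : x ∈ E
        · rw [hE] at hxE; simpa [hc0] using hxE
        · exact hx hxE
      have : μ = 0 := by rw [← hWD, withDensity_congr_ae this, withDensity_zero]
      exact (IsProbabilityMeasure.ne_zero μ) this
    have hc'0 : c' ≠ 0 := by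
      intro hc0
      have : h' =ᵐ[m] 0 := by
        filter_upwards [hoffE'] with x hx
        by_cases hxE : x ∈ E'
        · rw [hE'] at hxE; simpa [hc0] using hxE
        · exact hx hxE
      have : μ' = 0 := by rw [← hWD', withDensity_congr_ae this, withDensity_zero]
      exact (IsProbabilityMeasure.ne_zero μ') this
    have haeE : ∀ᵐ x ∂m, h x = c ∧ h' x = c' := by
      filter_upwards [hsum, hoffE, hoffE'] with x hx h0 h0'
      by_cases hxE : x ∈ E <;> by_cases hxE' : x ∈ E'
      · exact ⟨hxE, hxE'⟩
      · exfalso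
        have h'0 : h' x = 0 := h0' hxE'
        rw [hE] at hxE
        rw [hxE, h'0, add_zero] at hx
        rw [hx] at hcc
        exact hc'0 ((ENNReal.add_right_inj ENNReal.one_ne_top).mp
          (show (1 : ℝ≥0∞) + c' = 1 + 0 by rw [add_zero]; exact hcc))
      · exfalso
        have hh0 : h x = 0 := h0 hxE
        rw [hE'] at hxE'
        rw [hh0, hxE', zero_add] at hx
        rw [hx] at hcc
        exact hc0 (by
          have h2 : (1 : ℝ≥0∞) + c = 1 + 0 := by
            rw [add_zero, add_comm]; exact hcc
          exact (ENNReal.add_right_inj ENNReal.one_ne_top).mp h2)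
      · exfalso
        rw [h0 hxE, h0' hxE', add_zero] at hx
        exact zero_ne_one hx
    have hhc : h =ᵐ[m] fun _ => c := haeE.mono fun x hx => hx.1
    have hhc' : h' =ᵐ[m] fun _ => c' := haeE.mono fun x hx => hx.2
    have hμeq : μ = c • m := by
      rw [← hWD, withDensity_congr_ae hhc, withDensity_const]
    have hμ'eq : μ' = c' • m := by
      rw [← hWD', withDensity_congr_ae hhc', withDensity_const]
    have hce : c = c' := by
      have h1 : c * m univ = 1 := by
        have := congrArg (fun ρ : Measure α => ρ univ) hμeq
        simpa [measure_univ] using this.symm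
      have h2 : c' * m univ = 1 := by
        have := congrArg (fun ρ : Measure α => ρ univ) hμ'eq
        simpa [measure_univ] using this.symm
      have hmuniv : m univ = 2 := by
        rw [hm]; simp [Measure.add_apply, measure_univ]; norm_num
      rw [hmuniv] at h1 h2
      have h3 : c * 2 = c' * 2 := by rw [h1, h2]
      exact (ENNReal.mul_left_inj (by norm_num) (by norm_num)).mp h3
    rw [hμeq, hμ'eq, hce]
  · right
    have hmEE' : m (E ∩ E') = 0 := by
      have : ∀ᵐ x ∂m, x ∉ E ∩ E' := by
        filter_upwards [hsum] with x hx hxm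
        exact hcc (by rw [← hxm.1, ← hxm.2]; exact hx)
      simpa [ae_iff] using this
    have hμE' : μ E' = 0 := by
      have h1 : μ (E ∩ E') = 0 := hacμ hmEE'
      have h2 : μ E' ≤ μ (E ∩ E') + μ Eᶜ := by
        refine (measure_mono ?_).trans (measure_union_le _ _)
        intro x hx
        by_cases hxE : x ∈ E
        · exact Or.inl ⟨hxE, hx⟩
        · exact Or.inr hxE
      simpa [h1, hμEc] using h2
    exact ⟨E', hE'meas, hμE', hμ'E'c⟩

lemma Ergodic.map_of_comm {α β : Type*} [MeasurableSpace α] [MeasurableSpace β]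
    {f : α → α} {g : β → β} {p : α → β} (hp : Measurable p) (hg : Measurable g)
    (hcomm : ∀ x, g (p x) = p (f x)) {μ : Measure α} (h : Ergodic f μ) :
    Ergodic g (μ.map p) := by
  have hf := h.measurable
  constructor
  · refine ⟨hg, ?_⟩
    rw [Measure.map_map hg hp]
    have hgp : g ∘ p = p ∘ f := funext hcomm
    rw [hgp, ← Measure.map_map hp hf, h.map_eq]
  · constructor
    intro s hs hinv
    rw [eventuallyConst_set']
    have hps : MeasurableSet (p ⁻¹' s) := hp hs
    have hpinv : f ⁻¹' (p ⁻¹' s) = p ⁻¹' s := by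
      conv_rhs => rw [← hinv]
      ext x
      simp [Set.mem_preimage, hcomm x]
    rcases h.ae_empty_or_univ hps hpinv with h0 | h1
    · left
      rw [ae_eq_empty] at h0 ⊢
      rwa [Measure.map_apply hp hs]
    · right
      rw [ae_eq_univ] at h1 ⊢
      rw [Measure.map_apply hp hs.compl, Set.preimage_compl]
      exact h1

lemma Ergodic.of_inverse' {α : Type*} [MeasurableSpace α] {f g : α → α} (hg : Measurable g)
    (h1 : Function.LeftInverse g f) {μ : Measure α} (h : Ergodic f μ) : Ergodic g μ := by
  have hf := h.measurable
  have hpre : ∀ s : Set α, f ⁻¹' (g ⁻¹' s) = s := by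
    intro s; ext x; simp [Set.mem_preimage, h1 x]
  constructor
  · refine ⟨hg, ?_⟩
    ext s hs
    rw [Measure.map_apply hg hs]
    have := h.toMeasurePreserving.measure_preimage (hg hs).nullMeasurableSet
    rw [hpre s] at this
    exact this.symm
  · constructor
    intro s hs hinv
    rw [eventuallyConst_set']
    have : f ⁻¹' s = s := by conv_lhs => rw [← hinv, hpre s]
    exact h.ae_empty_or_univ hs this

lemma visits_ae {α : Type*} [MeasurableSpace α] {f : α → α} {ν : Measure α}
    [IsProbabilityMeasure ν] (hνerg : Ergodic f ν) {U : Set α} (hU : MeasurableSet U)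
    (hpos : 0 < ν U) : ∀ᵐ y ∂ν, ∃ n : ℕ, f^[n] y ∈ U := by
  set T := {y | ∀ n : ℕ, f^[n] y ∉ U} with hT
  have hTmeas : MeasurableSet T := by
    have : T = ⋂ n : ℕ, f^[n] ⁻¹' Uᶜ := by ext y; simp [hT]
    rw [this]
    exact MeasurableSet.iInter fun n => (hνerg.measurable.iterate n) hU.compl
  have hsub : T ⊆ f ⁻¹' T := by
    intro y hy n
    have := hy (n + 1)
    rwa [Function.iterate_succ_apply] at this
  rcases hνerg.ae_empty_or_univ_of_ae_le_preimage hTmeas.nullMeasurableSet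
      (HasSubset.Subset.eventuallyLE hsub) with h0 | h1
  · rw [ae_eq_empty] at h0
    rw [ae_iff]
    convert h0 using 2
    ext y; simp [hT]
  · exfalso
    rw [ae_eq_univ] at h1
    have hTU : U ⊆ Tᶜ := fun y hyU hyT => hyT 0 hyU
    have : ν U ≤ ν Tᶜ := measure_mono hTU
    rw [h1] at this
    exact absurd (lt_of_lt_of_le hpos this) (lt_irrefl 0)

lemma ae_doublyTransitive {B : Type*} [Fintype B] [TopologicalSpace B] [DiscreteTopology B]
    [MeasurableSpace B] [BorelSpace B] {Y : Set (ℤ → B)} (hY : MeasurableSet Y)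
    {ν : Measure (ℤ → B)} [IsProbabilityMeasure ν] (hνerg : Ergodic shiftMap ν)
    (hνY : ν Y = 1) (hνfull : FullSupportOn ν Y) :
    ∀ᵐ y ∂ν, DoublyTransitiveIn Y y := by
  have hinv : Ergodic shiftInvMap ν :=
    hνerg.of_inverse' continuous_shiftInvMap'.measurable shift_leftInv'
  have hbasis := TopologicalSpace.isBasis_countableBasis (ℤ → B)
  set S := {U ∈ TopologicalSpace.countableBasis (ℤ → B) | (U ∩ Y).Nonempty} with hS
  have hScount : S.Countable := (TopologicalSpace.countable_countableBasis _).mono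
    (sep_subset _ _)
  have haeY : ∀ᵐ y ∂ν, y ∈ Y := by
    rw [ae_iff]
    exact (prob_compl_eq_zero_iff hY).mpr hνY
  have hvisit : ∀ᵐ y ∂ν, ∀ U ∈ S, (∃ n : ℕ, shiftMap^[n] y ∈ U) ∧
      (∃ n : ℕ, shiftInvMap^[n] y ∈ U) := by
    rw [ae_ball_iff hScount]
    intro U hU
    have hUopen : IsOpen U := TopologicalSpace.isOpen_of_mem_countableBasis hU.1
    have hpos : 0 < ν U := hνfull U hUopen hU.2
    exact (visits_ae hνerg hUopen.measurableSet hpos).and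
      (visits_ae hinv hUopen.measurableSet hpos)
  filter_upwards [haeY, hvisit] with y hyY hyV
  refine ⟨hyY, ?_, ?_⟩
  · intro z hz
    rw [mem_closure_iff]
    intro V hVopen hzV
    obtain ⟨U, hU𝒞, hzU, hUV⟩ := hbasis.exists_subset_of_mem_open hzV hVopen
    obtain ⟨n, hn⟩ := (hyV U ⟨hU𝒞, ⟨z, hzU, hz⟩⟩).1
    exact ⟨shiftMap^[n] y, hUV hn, n, rfl⟩
  · intro z hz
    rw [mem_closure_iff]
    intro V hVopen hzV
    obtain ⟨U, hU𝒞, hzU, hUV⟩ := hbasis.exists_subset_of_mem_open hzV hVopen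
    obtain ⟨n, hn⟩ := (hyV U ⟨hU𝒞, ⟨z, hzU, hz⟩⟩).2
    exact ⟨shiftInvMap^[n] y, hUV hn, n, rfl⟩

lemma kernel_section_ae_one {𝒴 Ω : Type*} [MeasurableSpace 𝒴] [MeasurableSpace Ω]
    {ν : Measure 𝒴} [IsProbabilityMeasure ν] {κ : Kernel 𝒴 Ω}
    [IsMarkovKernel κ] {G : Set (𝒴 × Ω)} (hG : MeasurableSet G)
    (hfull : (ν ⊗ₘ κ) G = 1) : ∀ᵐ y ∂ν, κ y (Prod.mk y ⁻¹' G) = 1 := by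
  set f : 𝒴 → ℝ≥0∞ := fun y => κ y (Prod.mk y ⁻¹' G) with hf
  have hfmeas : Measurable f := Kernel.measurable_kernel_prodMk_left hG
  have hle : ∀ y, f y ≤ 1 := fun y => prob_le_one
  have hint : ∫⁻ y, f y ∂ν = 1 := by
    rw [hf, ← Measure.compProd_apply hG, hfull]
  have hzero : ∫⁻ y, (1 - f y) ∂ν = 0 := by
    rw [lintegral_sub hfmeas (by rw [hint]; exact ENNReal.one_ne_top)
      (Eventually.of_forall hle)]
    simp [hint]
  have hae := (lintegral_eq_zero_iff ((measurable_const.sub hfmeas))).mp hzero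
  filter_upwards [hae] with y hy
  exact le_antisymm (hle y) (tsub_eq_zero_iff_le.mp hy)

lemma compProd_snd_apply {𝒴 Ω : Type*} [MeasurableSpace 𝒴] [MeasurableSpace Ω]
    {ν : Measure 𝒴} [SFinite ν] (κ : Kernel 𝒴 Ω) [IsSFiniteKernel κ]
    {S : Set Ω} (hS : MeasurableSet S) :
    (ν ⊗ₘ κ) (Prod.snd ⁻¹' S) = ∫⁻ y, κ y S ∂ν := by
  rw [Measure.compProd_apply (measurable_snd hS)]
  rfl


/-- The coordinate marginals of a degree joining over `ν` are exactly
the ergodic lifts of `ν`. -/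
theorem degree_joining_margins
    (X : Set (ℤ → A)) (Y : Set (ℤ → B)) (π : (ℤ → A) → ℤ → B)
    (hXsofic : IsSofic X) (hXirr : IsIrreducibleShift X)
    (hfc : IsFactorCodeOn π X Y)
    (hfto : ∀ y : ℤ → B, (X ∩ π ⁻¹' {y}).Finite)
    (d : ℕ) (hd : 0 < d)
    (hdeg : ∀ y, DoublyTransitiveIn Y y → (X ∩ π ⁻¹' {y}).ncard = d)
    (ν : Measure (ℤ → B)) [IsProbabilityMeasure ν]
    (hνerg : Ergodic shiftMap ν) (hνY : ν Y = 1) (hνfull : FullSupportOn ν Y)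
    (lam : Measure (Fin d → ℤ → A)) (hlam : IsDegreeJoining X π ν d lam) :
    {μ : Measure (ℤ → A) | ∃ i : Fin d, μ = lam.map fun x => x i} =
      {μ : Measure (ℤ → A) |
        IsProbabilityMeasure μ ∧ Ergodic shiftMap μ ∧ μ X = 1 ∧ μ.map π = ν} := by

  classical
  obtain ⟨hlamErg, ⟨⟨hlamProb, hlamShift, hlamFull⟩, hlamMarg⟩, hlamSep⟩ := hlam
  haveI := hlamProb
  have hπcont : Continuous π := hfc.1.continuous
  have hπmeas : Measurable π := hπcont.measurable
  have hXcpt : IsCompact X := hXsofic.isCompact'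
  have hXmeas : MeasurableSet X := hXcpt.isClosed.measurableSet
  have hXne : X.Nonempty := by
    obtain ⟨m, Z, φ, hZ, hφ, hXeq⟩ := hXsofic
    exact hXeq ▸ hZ.1.image φ
  haveI : Nonempty (ℤ → A) := ⟨hXne.some⟩
  have hYmeas : MeasurableSet Y := by
    rw [← hfc.2]
    exact (hXcpt.image hπcont).isClosed.measurableSet
  -- the joining and separating sets
  set J : Set (Fin d → ℤ → A) :=
    {x | (∀ i, x i ∈ X) ∧ ∀ i j, π (x i) = π (x j)} with hJdef
  set D : Set (Fin d → ℤ → A) :=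
    {x | ∀ i j : Fin d, i ≠ j → x i ≠ x j} with hDdef
  have hJmeas : MeasurableSet J := by
    have : J = (⋂ i, (fun x : Fin d → ℤ → A => x i) ⁻¹' X) ∩
        ⋂ i, ⋂ j, {x : Fin d → ℤ → A | π (x i) = π (x j)} := by
      ext x; simp [hJdef, mem_iInter]
    rw [this]
    refine MeasurableSet.inter (MeasurableSet.iInter fun i => measurable_pi_apply i hXmeas)
      (MeasurableSet.iInter fun i => MeasurableSet.iInter fun j => ?_)
    exact (isClosed_eq (hπcont.comp (continuous_apply i))
      (hπcont.comp (continuous_apply j))).measurableSet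
  have hDmeas : MeasurableSet D := by
    have : D = ⋂ i, ⋂ j, {x : Fin d → ℤ → A | i ≠ j → x i ≠ x j} := by
      ext x; simp [hDdef, mem_iInter]
    rw [this]
    refine MeasurableSet.iInter fun i => MeasurableSet.iInter fun j => ?_
    by_cases hij : i = j
    · simp [hij]
    · have : {x : Fin d → ℤ → A | i ≠ j → x i ≠ x j} =
          {x : Fin d → ℤ → A | x i = x j}ᶜ := by
        ext x; simp [hij]
      rw [this]
      exact ((isClosed_eq (continuous_apply i) (continuous_apply j)).measurableSet).compl
  have hJD : lam (J ∩ D) = 1 := by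
    have hJ1 : lam J = 1 := hlamFull
    have hD1 : lam D = 1 := hlamSep
    have h1 : lam Jᶜ = 0 := (prob_compl_eq_zero_iff hJmeas).mpr hJ1
    have h2 : lam Dᶜ = 0 := (prob_compl_eq_zero_iff hDmeas).mpr hD1
    have h3 : lam (J ∩ D)ᶜ = 0 := by
      rw [Set.compl_inter]
      exact le_antisymm ((measure_union_le _ _).trans (by rw [h1, h2]; simp)) zero_le
    have := (prob_compl_eq_zero_iff (hJmeas.inter hDmeas)).mp h3
    exact this
  -- measurability of coordinate maps
  have hpim : ∀ i : Fin d, Measurable fun x : Fin d → ℤ → A => x i :=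
    fun i => measurable_pi_apply i
  -- the easy inclusion: properties of the marginals
  have hmargP : ∀ i : Fin d, IsProbabilityMeasure (lam.map fun x => x i) ∧
      Ergodic shiftMap (lam.map fun x => x i) ∧ (lam.map fun x => x i) X = 1 ∧
      (lam.map fun x => x i).map π = ν := by
    intro i
    refine ⟨Measure.isProbabilityMeasure_map (hpim i).aemeasurable, ?_, ?_, ?_⟩
    · exact hlamErg.map_of_comm (hpim i) continuous_shiftMap'.measurable (fun x => rfl)
    · rw [Measure.map_apply (hpim i) hXmeas]
      refine le_antisymm prob_le_one ?_
      rw [← hlamFull]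
      exact measure_mono fun x hx => hx.1 i
    · rw [Measure.map_map hπmeas (hpim i)]
      exact hlamMarg i
  ext μ
  simp only [Set.mem_setOf_eq]
  constructor
  · rintro ⟨i, rfl⟩
    exact hmargP i
  · rintro ⟨hμProb, hμErg, hμX, hμπ⟩
    haveI := hμProb
    by_contra hne
    push_neg at hne
    -- mutual singularity with each marginal
    have hsing : ∀ i : Fin d, μ ⟂ₘ lam.map fun x => x i := by
      intro i
      haveI := (hmargP i).1
      rcases ergodic_eq_or_mutuallySingular continuous_shiftInvMap'.measurable
        shift_leftInv' hμErg (hmargP i).2.1 with h | h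
      · exact absurd h (hne i)
      · exact h
    -- the key inequality via disintegration over ν
    have key : ∀ S : Set (ℤ → A), MeasurableSet S →
        μ S ≤ ∑ i : Fin d, (lam.map fun x => x i) S := by
      intro S hS
      set i₀ : Fin d := ⟨0, hd⟩
      set ρ₂ : Measure ((ℤ → B) × (ℤ → A)) := μ.map (fun x => (π x, x)) with hρ₂
      set ρ₁ : Measure ((ℤ → B) × (Fin d → ℤ → A)) :=
        lam.map (fun t => (π (t i₀), t)) with hρ₁
      have hmap₂ : Measurable fun x : ℤ → A => (π x, x) := hπmeas.prodMk measurable_id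
      have hmap₁ : Measurable fun t : Fin d → ℤ → A => (π (t i₀), t) :=
        (hπmeas.comp (hpim i₀)).prodMk measurable_id
      haveI : IsProbabilityMeasure ρ₂ := Measure.isProbabilityMeasure_map hmap₂.aemeasurable
      haveI : IsProbabilityMeasure ρ₁ := Measure.isProbabilityMeasure_map hmap₁.aemeasurable
      have hfst₂ : ρ₂.fst = ν := by
        rw [hρ₂, Measure.fst, Measure.map_map measurable_fst hmap₂]
        exact hμπ
      have hfst₁ : ρ₁.fst = ν := by
        rw [hρ₁, Measure.fst, Measure.map_map measurable_fst hmap₁]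
        exact hlamMarg i₀
      have hdis₂ : ν ⊗ₘ ρ₂.condKernel = ρ₂ := by
        rw [← hfst₂]; exact ρ₂.disintegrate _
      have hdis₁ : ν ⊗ₘ ρ₁.condKernel = ρ₁ := by
        rw [← hfst₁]; exact ρ₁.disintegrate _
      -- marginal formulas
      have hμapply : ∀ T : Set (ℤ → A), MeasurableSet T →
          μ T = ∫⁻ y, ρ₂.condKernel y T ∂ν := by
        intro T hT
        have h1 : μ T = ρ₂ (Prod.snd ⁻¹' T) := by
          rw [hρ₂, Measure.map_apply hmap₂ (measurable_snd hT)]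
          rfl
        rw [h1]
        conv_lhs => rw [← hdis₂]
        exact compProd_snd_apply _ hT
      have hlamapply : ∀ T : Set (Fin d → ℤ → A), MeasurableSet T →
          lam T = ∫⁻ y, ρ₁.condKernel y T ∂ν := by
        intro T hT
        have h1 : lam T = ρ₁ (Prod.snd ⁻¹' T) := by
          rw [hρ₁, Measure.map_apply hmap₁ (measurable_snd hT)]
          rfl
        rw [h1]
        conv_lhs => rw [← hdis₁]
        exact compProd_snd_apply _ hT
      -- good sets
      set G₂ : Set ((ℤ → B) × (ℤ → A)) := {p | p.2 ∈ X ∧ π p.2 = p.1} with hG₂def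
      have hG₂meas : MeasurableSet G₂ := by
        refine MeasurableSet.inter (measurable_snd hXmeas) ?_
        exact (isClosed_eq (hπcont.comp continuous_snd) continuous_fst).measurableSet
      set G₁ : Set ((ℤ → B) × (Fin d → ℤ → A)) :=
        {p | (p.2 ∈ J ∩ D) ∧ π (p.2 i₀) = p.1} with hG₁def
      have hG₁meas : MeasurableSet G₁ := by
        refine MeasurableSet.inter (measurable_snd (hJmeas.inter hDmeas)) ?_
        exact (isClosed_eq (hπcont.comp ((continuous_apply i₀).comp continuous_snd))
          continuous_fst).measurableSet
      have hae₂ : ∀ᵐ y ∂ν, ρ₂.condKernel y (Prod.mk y ⁻¹' G₂) = 1 := by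
        refine kernel_section_ae_one hG₂meas ?_
        rw [hdis₂, hρ₂, Measure.map_apply hmap₂ hG₂meas]
        have : (fun x : ℤ → A => (π x, x)) ⁻¹' G₂ = X := by
          ext x; simp [hG₂def]
        rw [this]; exact hμX
      have hae₁ : ∀ᵐ y ∂ν, ρ₁.condKernel y (Prod.mk y ⁻¹' G₁) = 1 := by
        refine kernel_section_ae_one hG₁meas ?_
        rw [hdis₁, hρ₁, Measure.map_apply hmap₁ hG₁meas]
        refine le_antisymm prob_le_one ?_
        rw [← hJD]
        refine measure_mono fun t ht => ?_
        exact ⟨ht, rfl⟩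
      have hDT : ∀ᵐ y ∂ν, DoublyTransitiveIn Y y :=
        ae_doublyTransitive hYmeas hνerg hνY hνfull
      -- rewrite the two sides as integrals
      rw [hμapply S hS]
      have hSi : ∀ i : Fin d, (lam.map fun x => x i) S =
          ∫⁻ y, ρ₁.condKernel y ((fun x : Fin d → ℤ → A => x i) ⁻¹' S) ∂ν := by
        intro i
        rw [Measure.map_apply (hpim i) hS]
        exact hlamapply _ ((hpim i) hS)
      have hsum : ∑ i : Fin d, (lam.map fun x => x i) S =
          ∫⁻ y, ∑ i : Fin d, ρ₁.condKernel y ((fun x : Fin d → ℤ → A => x i) ⁻¹' S) ∂ν := by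
        calc ∑ i : Fin d, (lam.map fun x => x i) S
            = ∑ i : Fin d, ∫⁻ y, ρ₁.condKernel y
                ((fun x : Fin d → ℤ → A => x i) ⁻¹' S) ∂ν :=
              Finset.sum_congr rfl fun i _ => hSi i
          _ = ∫⁻ y, ∑ i : Fin d, ρ₁.condKernel y
                ((fun x : Fin d → ℤ → A => x i) ⁻¹' S) ∂ν :=
              (lintegral_finset_sum _ fun i _ =>
                ProbabilityTheory.Kernel.measurable_coe _ ((hpim i) hS)).symm
      rw [hsum]
      refine lintegral_mono_ae ?_
      filter_upwards [hae₂, hae₁, hDT] with y h2 h1 hdt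
      haveI : IsProbabilityMeasure (ρ₂.condKernel y) := by infer_instance
      haveI : IsProbabilityMeasure (ρ₁.condKernel y) := by infer_instance
      by_cases hempty : (X ∩ π ⁻¹' {y} ∩ S).Nonempty
      · -- the fiber meets S, so some coordinate of a.e. tuple lies in S
        obtain ⟨z, hz⟩ := hempty
        have hfibcard : (X ∩ π ⁻¹' {y}).ncard = d := hdeg y hdt
        have hsubset : Prod.mk y ⁻¹' G₁ ⊆
            ⋃ i : Fin d, (fun x : Fin d → ℤ → A => x i) ⁻¹' S := by
          rintro t ⟨⟨htJ, htD⟩, hti₀⟩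
          have hti₀' : π (t i₀) = y := hti₀
          have ht1 : ∀ i, t i ∈ X := htJ.1
          have ht3 : ∀ i, π (t i) = y := by
            intro i
            rw [← hti₀']
            exact htJ.2 i i₀
          have hinj : Function.Injective t := by
            intro i j hij
            by_contra hneq
            exact htD i j hneq hij
          have hrange : Set.range t = X ∩ π ⁻¹' {y} := by
            refine Set.eq_of_subset_of_ncard_le ?_ ?_ (hfto y)
            · rintro _ ⟨i, rfl⟩
              exact ⟨ht1 i, ht3 i⟩
            · rw [hfibcard, ← Set.image_univ,
                Set.ncard_image_of_injective _ hinj, Set.ncard_univ,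
                Nat.card_eq_fintype_card, Fintype.card_fin]
          have hzmem : z ∈ Set.range t := by
            rw [hrange]; exact hz.1
          obtain ⟨i, hi⟩ := hzmem
          exact Set.mem_iUnion.mpr ⟨i, by simp only [Set.mem_preimage, hi]; exact hz.2⟩
        calc ρ₂.condKernel y S ≤ 1 := prob_le_one
          _ = ρ₁.condKernel y (Prod.mk y ⁻¹' G₁) := h1.symm
          _ ≤ ρ₁.condKernel y (⋃ i : Fin d, (fun x : Fin d → ℤ → A => x i) ⁻¹' S) :=
              measure_mono hsubset
          _ ≤ ∑ i : Fin d, ρ₁.condKernel y ((fun x : Fin d → ℤ → A => x i) ⁻¹' S) :=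
              measure_iUnion_fintype_le _ _
      · -- the fiber misses S
        have hzero : ρ₂.condKernel y S = 0 := by
          have hsub : S ⊆ (Prod.mk y ⁻¹' G₂)ᶜ := by
            intro x hxS hxG
            exact hempty ⟨x, ⟨hxG.1, hxG.2⟩, hxS⟩
          have hcompl : ρ₂.condKernel y (Prod.mk y ⁻¹' G₂)ᶜ = 0 := by
            have hm : MeasurableSet (Prod.mk y ⁻¹' G₂) := measurable_prodMk_left hG₂meas
            exact (prob_compl_eq_zero_iff hm).mpr h2
          exact le_antisymm (le_trans (measure_mono hsub) hcompl.le) zero_le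
        rw [hzero]
        exact zero_le
    -- derive a contradiction from mutual singularity
    choose s hsm hs0 hsc using hsing
    set T : Set (ℤ → A) := ⋃ i, s i with hTdef
    have hTmeas : MeasurableSet T := MeasurableSet.iUnion hsm
    have hμT : μ T = 0 := measure_iUnion_null hs0
    have hTc : ∀ i : Fin d, (lam.map fun x => x i) Tᶜ = 0 := by
      intro i
      exact measure_mono_null (Set.compl_subset_compl.mpr (Set.subset_iUnion s i)) (hsc i)
    have hkey := key Tᶜ hTmeas.compl
    rw [Finset.sum_eq_zero (fun i _ => hTc i)] at hkey
    have hμTc : μ Tᶜ = 0 := le_antisymm hkey zero_le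
    have hone : (1 : ℝ≥0∞) ≤ 0 := by
      have h2 := measure_union_le (μ := μ) T Tᶜ
      rwa [Set.union_compl_self, hμT, hμTc, add_zero, measure_univ] at h2
    exact absurd hone (by norm_num)
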